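/- arXiv:2105.07614 — 2 statements merged into one kernel-verified Lean document; each statement's English description precedes it below -/
import Mathlib

section
/- The increment Δ E[rk(R_{r,t})] := E[rk(R_{r,t+1})] − E[rk(R_{r,t})] is monotonically nondecreasing in r; if q is finite and t is arbitrary, the increase from r to r+1 is strict. -/
set_option linter.unusedSectionVars false
set_option maxHeartbeats 1000000

open Matrix Module Submodule Set Finset

section Aux
variable {F : Type} [Field F] [Fintype F] [DecidableEq F] {r t : ℕ}

/-- Prepend a column `v` to the matrix `A`. -/
def appendCol (A : Matrix (Fin r) (Fin t) F) (v : Fin r → F) :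
    Matrix (Fin r) (Fin (t + 1)) F := fun i => Fin.cons (v i) (A i)

lemma transpose_appendCol (A : Matrix (Fin r) (Fin t) F) (v : Fin r → F) :
    (appendCol A v)ᵀ = Fin.cons v Aᵀ := by
  funext j i
  refine Fin.cases ?_ ?_ j <;> simp [appendCol]
  · rfl
  · intro k; rfl

lemma rank_appendCol_mem (A : Matrix (Fin r) (Fin t) F) (v : Fin r → F)
    (h : v ∈ Submodule.span F (Set.range Aᵀ)) :
    (appendCol A v).rank = A.rank := by
  rw [rank_eq_finrank_span_cols, rank_eq_finrank_span_cols]; unfold Matrix.col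
  rw [transpose_appendCol,
    Fin.range_cons v (Aᵀ : Fin t → Fin r → F), Submodule.span_insert_eq_span h]

lemma rank_appendCol_not_mem (A : Matrix (Fin r) (Fin t) F) (v : Fin r → F)
    (h : v ∉ Submodule.span F (Set.range Aᵀ)) :
    (appendCol A v).rank = A.rank + 1 := by
  have hv : v ≠ 0 := fun h0 => h (h0 ▸ (Submodule.span F (Set.range Aᵀ)).zero_mem)
  rw [rank_eq_finrank_span_cols, rank_eq_finrank_span_cols]; unfold Matrix.col
  rw [transpose_appendCol,
    Fin.range_cons v (Aᵀ : Fin t → Fin r → F), Submodule.span_insert]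
  have hdisj : Disjoint (Submodule.span F (Set.range Aᵀ)) (F ∙ v) :=
    (Submodule.disjoint_span_singleton' hv).2 h
  have := Submodule.finrank_sup_add_finrank_inf_eq (F ∙ v) (Submodule.span F (Set.range Aᵀ))
  rw [(hdisj.symm).eq_bot, finrank_bot, add_zero, finrank_span_singleton hv] at this
  omega

lemma rank_appendCol_le (A : Matrix (Fin r) (Fin t) F) (v : Fin r → F) :
    (appendCol A v).rank ≤ A.rank + 1 := by
  classical
  by_cases h : v ∈ Submodule.span F (Set.range Aᵀ)
  · rw [rank_appendCol_mem A v h]; omega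
  · rw [rank_appendCol_not_mem A v h]

lemma sum_rank_append (A : Matrix (Fin r) (Fin t) F) :
    ∑ v : Fin r → F, ((appendCol A v).rank : ℝ)
      = (Fintype.card F : ℝ) ^ r * ((A.rank : ℝ) + 1) - (Fintype.card F : ℝ) ^ A.rank := by
  classical
  have hcard : (Finset.univ.filter (fun v : Fin r → F =>
      v ∈ Submodule.span F (Set.range Aᵀ))).card = Fintype.card F ^ A.rank := by
    rw [← Fintype.card_subtype,
      show A.rank = finrank F (Submodule.span F (Set.range Aᵀ)) from rank_eq_finrank_span_cols A]
    exact card_eq_pow_finrank (K := F) (V := Submodule.span F (Set.range Aᵀ))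
  have key : ∀ v : Fin r → F, ((appendCol A v).rank : ℝ)
      = ((A.rank : ℝ) + 1) - (if v ∈ Submodule.span F (Set.range Aᵀ) then (1 : ℝ) else 0) := by
    intro v
    by_cases h : v ∈ Submodule.span F (Set.range Aᵀ)
    · rw [rank_appendCol_mem A v h, if_pos h]; ring
    · rw [rank_appendCol_not_mem A v h, if_neg h]; push_cast; ring
  rw [Finset.sum_congr rfl (fun v _ => key v), Finset.sum_sub_distrib, Finset.sum_const,
    Finset.sum_boole, Finset.card_univ, hcard]
  simp [Fintype.card_fun]
  ring

lemma appendCol_bijective :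
    Function.Bijective (fun p : Matrix (Fin r) (Fin t) F × (Fin r → F) =>
      appendCol p.1 p.2) := by
  rw [Function.bijective_iff_has_inverse]
  refine ⟨fun B => (fun i j => B i j.succ, fun i => B i 0), fun p => ?_, fun B => ?_⟩
  · obtain ⟨A, v⟩ := p
    simp [appendCol]
  · funext i j
    refine Fin.cases ?_ ?_ j <;> simp [appendCol]

lemma sum_rank_succ_fun (g : ℕ → ℝ) :
    ∑ B : Matrix (Fin r) (Fin (t + 1)) F, g B.rank
      = ∑ A : Matrix (Fin r) (Fin t) F, ∑ v : Fin r → F, g (appendCol A v).rank := by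
  rw [show (∑ A : Matrix (Fin r) (Fin t) F, ∑ v : Fin r → F, g (appendCol A v).rank)
      = ∑ p : Matrix (Fin r) (Fin t) F × (Fin r → F), g (appendCol p.1 p.2).rank from
    (Fintype.sum_prod_type (f := fun p => g (appendCol p.1 p.2).rank)).symm]
  exact (Fintype.sum_bijective _ appendCol_bijective _ _ (fun p => rfl)).symm

lemma sum_rank_transpose (g : ℕ → ℝ) :
    ∑ A : Matrix (Fin r) (Fin t) F, g A.rank
      = ∑ B : Matrix (Fin t) (Fin r) F, g B.rank := by
  refine Fintype.sum_bijective (fun A => Aᵀ) ⟨fun A B h => ?_, fun B => ⟨Bᵀ, transpose_transpose B⟩⟩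
    _ _ (fun A => by rw [rank_transpose])
  simpa using congrArg Matrix.transpose h

lemma card_matrix_real :
    (Fintype.card (Matrix (Fin r) (Fin t) F) : ℝ) = (Fintype.card F : ℝ) ^ (r * t) := by
  have : Fintype.card (Matrix (Fin r) (Fin t) F) = Fintype.card F ^ (r * t) := by
    rw [Fintype.card_congr (Matrix.of : (Fin r → Fin t → F) ≃ _).symm]
    simp [Fintype.card_fun, ← pow_mul, mul_comm]
  rw [this]
  push_cast
  rfl

end Aux

/-- Total sum of `q ^ rank` over all `r × t` matrices. -/
noncomputable def rankPowSum (F : Type) [Field F] [Fintype F] [DecidableEq F] (r t : ℕ) : ℝ :=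
  ∑ A : Matrix (Fin r) (Fin t) F, (Fintype.card F : ℝ) ^ A.rank

/-- Expected rank of an `r × t` uniformly random matrix over `F`. -/
noncomputable def expRank (F : Type) [Field F] [Fintype F] [DecidableEq F] (r t : ℕ) : ℝ :=
  (∑ A : Matrix (Fin r) (Fin t) F, (A.rank : ℝ)) /
    (Fintype.card (Matrix (Fin r) (Fin t) F) : ℝ)

section Main
variable {F : Type} [Field F] [Fintype F] [DecidableEq F]

lemma one_lt_qR : (1 : ℝ) < (Fintype.card F : ℝ) := by
  exact_mod_cast Fintype.one_lt_card (α := F)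

lemma delta_eq (r t : ℕ) :
    expRank F r (t + 1) - expRank F r t
      = 1 - rankPowSum F r t / (Fintype.card F : ℝ) ^ (r * (t + 1)) := by
  have hq : (0 : ℝ) < (Fintype.card F : ℝ) := lt_trans one_pos one_lt_qR
  have hsum : ∑ B : Matrix (Fin r) (Fin (t + 1)) F, ((B.rank : ℕ) : ℝ)
      = (Fintype.card F : ℝ) ^ r *
          ((∑ A : Matrix (Fin r) (Fin t) F, (A.rank : ℝ)) + (Fintype.card F : ℝ) ^ (r * t))
        - rankPowSum F r t := by
    rw [sum_rank_succ_fun (fun n => (n : ℝ)),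
      Finset.sum_congr rfl (fun A _ => sum_rank_append A), Finset.sum_sub_distrib]
    rw [rankPowSum]
    congr 1
    rw [← Finset.mul_sum, Finset.sum_add_distrib, Finset.sum_const, Finset.card_univ,
      nsmul_eq_mul, mul_one, card_matrix_real]
  unfold expRank
  rw [hsum, card_matrix_real, card_matrix_real]
  have h1 : (Fintype.card F : ℝ) ^ (r * t) ≠ 0 := by positivity
  have h2 : (Fintype.card F : ℝ) ^ (r * (t + 1)) ≠ 0 := by positivity
  have hsplit : (Fintype.card F : ℝ) ^ (r * (t + 1))
      = (Fintype.card F : ℝ) ^ r * (Fintype.card F : ℝ) ^ (r * t) := by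
    rw [← pow_add]; ring_nf
  rw [hsplit] at h2 ⊢
  field_simp
  ring

lemma rankPowSum_lt (r t : ℕ) :
    rankPowSum F (r + 1) t < (Fintype.card F : ℝ) ^ (t + 1) * rankPowSum F r t := by
  have hq1 : (1 : ℝ) < (Fintype.card F : ℝ) := one_lt_qR
  have hq : (0 : ℝ) < (Fintype.card F : ℝ) := lt_trans one_pos hq1
  have h1 : rankPowSum F (r + 1) t
      = ∑ p : Matrix (Fin t) (Fin r) F × (Fin t → F),
          (Fintype.card F : ℝ) ^ (appendCol p.1 p.2).rank := by
    rw [rankPowSum, sum_rank_transpose (fun n => (Fintype.card F : ℝ) ^ n),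
      sum_rank_succ_fun (fun n => (Fintype.card F : ℝ) ^ n)]
    exact (Fintype.sum_prod_type
      (f := fun p : Matrix (Fin t) (Fin r) F × (Fin t → F) =>
        (Fintype.card F : ℝ) ^ (appendCol p.1 p.2).rank)).symm
  have h2 : (∑ p : Matrix (Fin t) (Fin r) F × (Fin t → F),
        (Fintype.card F : ℝ) ^ (appendCol p.1 p.2).rank)
      < ∑ p : Matrix (Fin t) (Fin r) F × (Fin t → F),
          (Fintype.card F : ℝ) ^ (p.1.rank + 1) := by
    refine Finset.sum_lt_sum (fun p _ => ?_) ⟨(0, 0), Finset.mem_univ _, ?_⟩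
    · exact pow_le_pow_right₀ hq1.le (rank_appendCol_le p.1 p.2)
    · have hz : appendCol (0 : Matrix (Fin t) (Fin r) F) (0 : Fin t → F) = 0 := by
        funext i j
        refine Fin.cases ?_ ?_ j <;> simp [appendCol]
      simp only [hz, Matrix.rank_zero]
      simpa using hq1
  have h3 : (∑ p : Matrix (Fin t) (Fin r) F × (Fin t → F),
        (Fintype.card F : ℝ) ^ (p.1.rank + 1))
      = (Fintype.card F : ℝ) ^ (t + 1) * rankPowSum F r t := by
    rw [Fintype.sum_prod_type
      (f := fun p : Matrix (Fin t) (Fin r) F × (Fin t → F) =>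
        (Fintype.card F : ℝ) ^ (p.1.rank + 1))]
    simp only [Finset.sum_const, Finset.card_univ, nsmul_eq_mul]
    rw [show (Fintype.card (Fin t → F) : ℝ) = (Fintype.card F : ℝ) ^ t by
      simp [Fintype.card_fun]]
    rw [rankPowSum, sum_rank_transpose (fun n => (Fintype.card F : ℝ) ^ n), Finset.mul_sum]
    refine Finset.sum_congr rfl fun B _ => ?_
    rw [pow_succ, pow_succ]
    ring
  rw [h1]
  calc _ < _ := h2
    _ = _ := h3

end Main

/-- The increment `Δ E[rk(R_{r,t})] := E[rk(R_{r,t+1})] − E[rk(R_{r,t})]`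
is monotonically nondecreasing in `r`; since `q` is finite, the increase
from `r` to `r+1` is strict (for every `t`). -/
theorem expRank_increment_mono_in_r
    (F : Type) [Field F] [Fintype F] [DecidableEq F] (r t : ℕ) :
    expRank F r (t + 1) - expRank F r t
      ≤ expRank F (r + 1) (t + 1) - expRank F (r + 1) t
    ∧ expRank F r (t + 1) - expRank F r t
      < expRank F (r + 1) (t + 1) - expRank F (r + 1) t := by
  have hq : (0 : ℝ) < (Fintype.card F : ℝ) := lt_trans one_pos one_lt_qR
  have key : expRank F r (t + 1) - expRank F r t
      < expRank F (r + 1) (t + 1) - expRank F (r + 1) t := by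
    rw [delta_eq, delta_eq]
    have hp1 : (0 : ℝ) < (Fintype.card F : ℝ) ^ (r * (t + 1)) := by positivity
    have hp2 : (0 : ℝ) < (Fintype.card F : ℝ) ^ ((r + 1) * (t + 1)) := by positivity
    have hlt : rankPowSum F (r + 1) t / (Fintype.card F : ℝ) ^ ((r + 1) * (t + 1))
        < rankPowSum F r t / (Fintype.card F : ℝ) ^ (r * (t + 1)) := by
      rw [div_lt_div_iff₀ hp2 hp1]
      calc rankPowSum F (r + 1) t * (Fintype.card F : ℝ) ^ (r * (t + 1))
          < ((Fintype.card F : ℝ) ^ (t + 1) * rankPowSum F r t)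
              * (Fintype.card F : ℝ) ^ (r * (t + 1)) :=
            mul_lt_mul_of_pos_right (rankPowSum_lt r t) hp1
        _ = rankPowSum F r t * (Fintype.card F : ℝ) ^ ((r + 1) * (t + 1)) := by
            rw [show (r + 1) * (t + 1) = (t + 1) + r * (t + 1) by ring, pow_add]
            ring
    linarith
  exact ⟨le_of_lt key, key⟩
end

section
/- Greedy correctness: The water-filling greedy algorithm that, starting from t_r = 0 for all r and remaining budget u = t_avg, repeatedly picks r maximizing Δ_{r,⌊t_r⌋} and increases t_r to the next integer (or by u/h_r if the budget is insufficient, then stopping), terminates with a feasible solution {t_r} (Σ_r h_r t_r = t_avg) that is optimal for max Σ_r h_r E_r(t_r) subject to Σ_r h_r t_r = t_avg, t_r ≥ 0, and has at most one non-integer coordinate. -/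
open scoped Classical

/-- Linear interpolation of a function defined on the naturals. -/
noncomputable def interp (E : ℕ → ℝ) (x : ℝ) : ℝ :=
  (x - (⌊x⌋ : ℝ)) * E (⌊x⌋.toNat + 1) + (1 - (x - (⌊x⌋ : ℝ))) * E ⌊x⌋.toNat

/-- A rank `r ∈ {0,…,M}` maximizing the slope `Δ_{r,⌊t_r⌋}`, where
`Δ_{r,t} = E_r(t+1) − E_r(t)`. -/
noncomputable def pick (M : ℕ) (E : ℕ → ℕ → ℝ) (t : ℕ → ℝ) : ℕ :=
  Classical.choose
    ((Finset.range (M + 1)).exists_max_image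
      (fun r => E r (⌊t r⌋.toNat + 1) - E r ⌊t r⌋.toNat) ⟨0, by simp⟩)

/-- One step of the water-filling greedy algorithm on the state (recoding numbers,
remaining budget): pick `r` maximizing `Δ_{r,⌊t_r⌋}` and raise `t_r` to the next integer
if the remaining budget suffices, otherwise spend the whole remaining budget on `t_r`. -/
noncomputable def greedyStep (M : ℕ) (h : ℕ → ℝ) (E : ℕ → ℕ → ℝ)
    (st : (ℕ → ℝ) × ℝ) : (ℕ → ℝ) × ℝ :=
  if st.2 ≤ 0 then st
  else
    let t := st.1
    let r := pick M E t
    if h r * (1 - (t r - (⌊t r⌋ : ℝ))) ≤ st.2 then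
      (Function.update t r ((⌊t r⌋ : ℝ) + 1), st.2 - h r * (1 - (t r - (⌊t r⌋ : ℝ))))
    else
      (Function.update t r (t r + st.2 / h r), 0)

lemma interp_natCast (E : ℕ → ℝ) (n : ℕ) : interp E (n : ℝ) = E n := by
  simp [interp]

lemma slope_anti (E : ℕ → ℝ) (hconc : ∀ t, E (t + 2) - E (t + 1) ≤ E (t + 1) - E t)
    {m n : ℕ} (hmn : m ≤ n) : E (n + 1) - E n ≤ E (m + 1) - E m :=
  (antitone_nat_of_succ_le (f := fun k => E (k + 1) - E k)
    (fun k => by have := hconc k; exact this) hmn : _)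

lemma interp_cell (E : ℕ → ℝ) (n : ℕ) {x : ℝ} (h1 : (n : ℝ) ≤ x) (h2 : x ≤ (n : ℝ) + 1) :
    interp E x = E n + (x - n) * (E (n + 1) - E n) := by
  rcases lt_or_eq_of_le h2 with h2 | h2
  · have hf : ⌊x⌋ = (n : ℤ) := Int.floor_eq_iff.2 ⟨by exact_mod_cast h1, by push_cast; linarith⟩
    simp only [interp, hf, Int.toNat_natCast, Int.cast_natCast]
    ring
  · have : x = ((n + 1 : ℕ) : ℝ) := by push_cast; linarith
    rw [this, interp_natCast]
    push_cast
    ring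

lemma floor_toNat_le {a : ℝ} (h0 : 0 ≤ a) {n : ℕ} (h : a ≤ n) : ⌊a⌋.toNat ≤ n := by
  have h1 : ⌊a⌋ ≤ (n : ℤ) := by
    have := Int.floor_le_floor (R := ℝ) h
    rwa [Int.floor_natCast] at this
  omega

lemma interp_upper_nat (E : ℕ → ℝ) (hconc : ∀ t, E (t + 2) - E (t + 1) ≤ E (t + 1) - E t)
    (n : ℕ) : ∀ a : ℝ, 0 ≤ a → a ≤ (n : ℝ) →
    interp E (n : ℝ) - interp E a ≤ (E (⌊a⌋.toNat + 1) - E ⌊a⌋.toNat) * ((n : ℝ) - a) := by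
  induction n with
  | zero =>
    intro a h0 h1
    have : a = 0 := le_antisymm (by exact_mod_cast h1) h0
    subst this
    simp
  | succ n ih =>
    intro a h0 h1
    rcases le_or_gt a (n : ℝ) with hle | hlt
    · have hfl : ⌊a⌋.toNat ≤ n := floor_toNat_le h0 hle
      have hD : E (n + 1) - E n ≤ E (⌊a⌋.toNat + 1) - E ⌊a⌋.toNat := slope_anti E hconc hfl
      have hih := ih a h0 hle
      have e1 : interp E ((n : ℝ) + 1) = E (n + 1) := by
        rw [show ((n : ℝ) + 1) = ((n + 1 : ℕ) : ℝ) by push_cast; ring, interp_natCast]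
      have e2 : interp E (n : ℝ) = E n := interp_natCast E n
      have hna : (0 : ℝ) ≤ (n : ℝ) - a := by linarith
      push_cast
      nlinarith [mul_le_mul_of_nonneg_right hD hna]
    · rcases lt_or_eq_of_le h1 with h1' | h1'
      · have hfl : ⌊a⌋ = (n : ℤ) := Int.floor_eq_iff.2 ⟨by exact_mod_cast hlt.le, by push_cast at h1' ⊢; linarith⟩
        have hcell := interp_cell E n (le_of_lt hlt) (by push_cast at h1' ⊢; linarith)
        have e1 : interp E ((n : ℝ) + 1) = E (n + 1) := by
          rw [show ((n : ℝ) + 1) = ((n + 1 : ℕ) : ℝ) by push_cast; ring, interp_natCast]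
        have hEq : interp E ((n : ℝ) + 1) - interp E a
            = (E (n + 1) - E n) * (((n : ℝ) + 1) - a) := by
          rw [e1, hcell]; ring
        push_cast
        rw [hfl]
        simp only [Int.toNat_natCast]
        linarith [hEq]
      · rw [← h1']
        simp

lemma interp_upper (E : ℕ → ℝ) (hconc : ∀ t, E (t + 2) - E (t + 1) ≤ E (t + 1) - E t)
    {a b : ℝ} (h0 : 0 ≤ a) (hab : a ≤ b) :
    interp E b - interp E a ≤ (E (⌊a⌋.toNat + 1) - E ⌊a⌋.toNat) * (b - a) := by
  set n := ⌊b⌋.toNat with hn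
  have hb0 : (0 : ℝ) ≤ b := le_trans h0 hab
  have htn : ((⌊b⌋.toNat : ℕ) : ℝ) = (⌊b⌋ : ℝ) := by
    rw [← Int.cast_natCast, Int.toNat_of_nonneg (Int.floor_nonneg.2 hb0)]
  have hnb : (n : ℝ) ≤ b := by rw [hn, htn]; exact Int.floor_le b
  have hbn : b < (n : ℝ) + 1 := by rw [hn, htn]; exact Int.lt_floor_add_one b
  rcases le_or_gt (n : ℝ) a with hcase | hcase
  · -- same cell
    have hfa : ⌊a⌋ = (n : ℤ) := Int.floor_eq_iff.2 ⟨by exact_mod_cast hcase, by push_cast; linarith⟩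
    have hca := interp_cell E n hcase (by linarith)
    have hcb := interp_cell E n hnb (by linarith)
    rw [hfa]
    simp only [Int.toNat_natCast]
    rw [hca, hcb]
    ring_nf
    linarith
  · -- a < n
    have han : a ≤ (n : ℝ) := hcase.le
    have h1 := interp_upper_nat E hconc n a h0 han
    have hcb := interp_cell E n hnb (by linarith)
    have hcn : interp E (n : ℝ) = E n := interp_natCast E n
    have hfl : ⌊a⌋.toNat ≤ n := floor_toNat_le h0 han
    have hD : E (n + 1) - E n ≤ E (⌊a⌋.toNat + 1) - E ⌊a⌋.toNat := slope_anti E hconc hfl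
    have h2 : interp E b - interp E (n : ℝ) ≤ (E (⌊a⌋.toNat + 1) - E ⌊a⌋.toNat) * (b - (n : ℝ)) := by
      rw [hcb, hcn]
      have : (0:ℝ) ≤ b - n := by linarith
      nlinarith [mul_le_mul_of_nonneg_right hD this]
    have hsplit : (E (⌊a⌋.toNat + 1) - E ⌊a⌋.toNat) * (b - a)
        = (E (⌊a⌋.toNat + 1) - E ⌊a⌋.toNat) * (b - (n : ℝ))
          + (E (⌊a⌋.toNat + 1) - E ⌊a⌋.toNat) * ((n : ℝ) - a) := by ring
    linarith

lemma interp_lower_nat (E : ℕ → ℝ) (hconc : ∀ t, E (t + 2) - E (t + 1) ≤ E (t + 1) - E t)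
    (n : ℕ) : ∀ a : ℝ, 0 ≤ a → a ≤ (n : ℝ) + 1 →
    (E (n + 1) - E n) * (((n : ℝ) + 1) - a) ≤ interp E ((n : ℝ) + 1) - interp E a := by
  induction n with
  | zero =>
    intro a h0 h1
    have hca := interp_cell E 0 (x := a) (by exact_mod_cast h0) (by push_cast at h1 ⊢; linarith)
    have hcb := interp_cell E 0 (x := (0 : ℝ) + 1) (by norm_num) (by norm_num)
    push_cast at hca hcb ⊢
    rw [hca, hcb]
    ring_nf
    exact le_refl _
  | succ n ih =>
    intro a h0 h1
    push_cast at h1 ⊢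
    have e2 : interp E ((n : ℝ) + 1 + 1) = E (n + 2) := by
      rw [show ((n : ℝ) + 1 + 1) = ((n + 2 : ℕ) : ℝ) by push_cast; ring, interp_natCast]
    simp only [show n + 1 + 1 = n + 2 from rfl]
    rcases le_or_gt ((n : ℝ) + 1) a with hcase | hcase
    · have hca := interp_cell E (n + 1) (x := a) (by push_cast; linarith) (by push_cast; linarith)
      push_cast at hca
      have heq : interp E ((n : ℝ) + 1 + 1) - interp E a
          = (E (n + 2) - E (n + 1)) * (((n : ℝ) + 1 + 1) - a) := by
        rw [e2, hca]
        simp only [show n + 1 + 1 = n + 2 from rfl]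
        ring
      linarith [heq]
    · have hih := ih a h0 (by linarith)
      have e1 : interp E ((n : ℝ) + 1) = E (n + 1) := by
        rw [show ((n : ℝ) + 1) = ((n + 1 : ℕ) : ℝ) by push_cast; ring, interp_natCast]
      have hD : E (n + 2) - E (n + 1) ≤ E (n + 1) - E n := hconc n
      have hpos : (0 : ℝ) ≤ (n : ℝ) + 1 - a := by linarith
      have h2 : (E (n + 2) - E (n + 1)) * ((n : ℝ) + 1 - a) ≤ (E (n + 1) - E n) * ((n : ℝ) + 1 - a) :=
        mul_le_mul_of_nonneg_right hD hpos
      have hsplit : (E (n + 2) - E (n + 1)) * (((n : ℝ) + 1 + 1) - a)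
          = (E (n + 2) - E (n + 1)) + (E (n + 2) - E (n + 1)) * (((n : ℝ) + 1) - a) := by ring
      rw [e2] at *
      linarith [hih, e1]

lemma interp_lower (E : ℕ → ℝ) (hconc : ∀ t, E (t + 2) - E (t + 1) ≤ E (t + 1) - E t)
    {a b : ℝ} (h0 : 0 ≤ a) (hab : a ≤ b) (hb : 0 < b) :
    (E ⌈b⌉.toNat - E (⌈b⌉.toNat - 1)) * (b - a) ≤ interp E b - interp E a := by
  have hcpos : (0 : ℤ) < ⌈b⌉ := Int.ceil_pos.2 hb
  obtain ⟨k, hk⟩ : ∃ k, ⌈b⌉.toNat = k + 1 := ⟨⌈b⌉.toNat - 1, by omega⟩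
  have hceil : ⌈b⌉ = (k : ℤ) + 1 := by omega
  have hkb : (k : ℝ) < b := by
    have : (k : ℤ) < ⌈b⌉ := by omega
    exact_mod_cast Int.lt_ceil.1 this
  have hbk : b ≤ (k : ℝ) + 1 := by
    have := Int.le_ceil b
    rw [hceil] at this
    push_cast at this
    linarith
  rw [hk]
  simp only [Nat.add_sub_cancel]
  rcases le_or_gt (k : ℝ) a with hcase | hcase
  · -- same cell
    have hca := interp_cell E k (x := a) hcase (by linarith)
    have hcb := interp_cell E k (x := b) hkb.le hbk
    have heq : interp E b - interp E a = (E (k + 1) - E k) * (b - a) := by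
      rw [hca, hcb]; ring
    linarith [heq]
  · -- a < k, so k ≥ 1
    have hk1 : 1 ≤ k := by
      by_contra hc
      push_neg at hc
      interval_cases k
      · simp at hcase; linarith
    obtain ⟨j, hj⟩ : ∃ j, k = j + 1 := ⟨k - 1, by omega⟩
    subst hj
    have hih := interp_lower_nat E hconc j a h0 (by push_cast at hcase ⊢; linarith)
    have hcb := interp_cell E (j + 1) (x := b) (by push_cast at hkb ⊢; linarith)
      (by push_cast at hbk ⊢; linarith)
    have e1 : interp E ((j : ℝ) + 1) = E (j + 1) := by
      rw [show ((j : ℝ) + 1) = ((j + 1 : ℕ) : ℝ) by push_cast; ring, interp_natCast]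
    push_cast at hcb
    have hD : E (j + 2) - E (j + 1) ≤ E (j + 1) - E j := hconc j
    have hpos : (0 : ℝ) ≤ (j : ℝ) + 1 - a := by push_cast at hcase; linarith
    have h2 : (E (j + 2) - E (j + 1)) * ((j : ℝ) + 1 - a) ≤ (E (j + 1) - E j) * ((j : ℝ) + 1 - a) :=
      mul_le_mul_of_nonneg_right hD hpos
    have hbsplit : interp E b - interp E a
        = (interp E b - interp E ((j : ℝ) + 1)) + (interp E ((j : ℝ) + 1) - interp E a) := by ring
    have hcell2 : interp E b - interp E ((j : ℝ) + 1) = (b - ((j : ℝ) + 1)) * (E (j + 2) - E (j + 1)) := by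
      rw [hcb, e1]
      simp only [show j + 1 + 1 = j + 2 from rfl]
      ring
    simp only [show j + 1 + 1 = j + 2 from rfl] at *
    push_cast
    nlinarith [hih, h2, hcell2, hbsplit]

lemma interp_grad (E : ℕ → ℝ) (hconc : ∀ t, E (t + 2) - E (t + 1) ≤ E (t + 1) - E t)
    {lam s t : ℝ} (hs : 0 ≤ s) (ht : 0 ≤ t)
    (h1 : E (⌊t⌋.toNat + 1) - E ⌊t⌋.toNat ≤ lam)
    (h2 : 0 < t → lam ≤ E ⌈t⌉.toNat - E (⌈t⌉.toNat - 1)) :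
    interp E s - interp E t ≤ lam * (s - t) := by
  rcases le_or_gt t s with hts | hst
  · have hU := interp_upper E hconc ht hts
    have : (E (⌊t⌋.toNat + 1) - E ⌊t⌋.toNat) * (s - t) ≤ lam * (s - t) :=
      mul_le_mul_of_nonneg_right h1 (by linarith)
    linarith
  · have htpos : 0 < t := lt_of_le_of_lt hs hst
    have hL := interp_lower E hconc hs hst.le htpos
    have : lam * (t - s) ≤ (E ⌈t⌉.toNat - E (⌈t⌉.toNat - 1)) * (t - s) :=
      mul_le_mul_of_nonneg_right (h2 htpos) (by linarith)
    nlinarith [hL, this]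

lemma pick_spec (M : ℕ) (E : ℕ → ℕ → ℝ) (t : ℕ → ℝ) :
    pick M E t ∈ Finset.range (M + 1) ∧
    ∀ r ∈ Finset.range (M + 1),
      E r (⌊t r⌋.toNat + 1) - E r ⌊t r⌋.toNat ≤
      E (pick M E t) (⌊t (pick M E t)⌋.toNat + 1) - E (pick M E t) ⌊t (pick M E t)⌋.toNat :=
  Classical.choose_spec ((Finset.range (M + 1)).exists_max_image
      (fun r => E r (⌊t r⌋.toNat + 1) - E r ⌊t r⌋.toNat) ⟨0, by simp⟩)

lemma greedyStep_nonpos (M : ℕ) (h : ℕ → ℝ) (E : ℕ → ℕ → ℝ) (st : (ℕ → ℝ) × ℝ)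
    (hu : st.2 ≤ 0) : greedyStep M h E st = st := by
  simp [greedyStep, hu]

lemma greedyStep_full (M : ℕ) (h : ℕ → ℝ) (E : ℕ → ℕ → ℝ) (t : ℕ → ℝ) (u : ℝ)
    (hu : 0 < u) (hc : h (pick M E t) * (1 - (t (pick M E t) - (⌊t (pick M E t)⌋ : ℝ))) ≤ u) :
    greedyStep M h E (t, u) =
      (Function.update t (pick M E t) ((⌊t (pick M E t)⌋ : ℝ) + 1),
        u - h (pick M E t) * (1 - (t (pick M E t) - (⌊t (pick M E t)⌋ : ℝ)))) := by
  simp only [greedyStep, not_le.2 hu, if_false]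
  rw [if_pos hc]

lemma greedyStep_part (M : ℕ) (h : ℕ → ℝ) (E : ℕ → ℕ → ℝ) (t : ℕ → ℝ) (u : ℝ)
    (hu : 0 < u) (hc : ¬ h (pick M E t) * (1 - (t (pick M E t) - (⌊t (pick M E t)⌋ : ℝ))) ≤ u) :
    greedyStep M h E (t, u) =
      (Function.update t (pick M E t) (t (pick M E t) + u / h (pick M E t)), 0) := by
  simp only [greedyStep, not_le.2 hu, if_false]
  rw [if_neg hc]

lemma sum_update_mul (h t : ℕ → ℝ) (s : Finset ℕ) {p : ℕ} (hp : p ∈ s) (v : ℝ) :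
    ∑ r ∈ s, h r * Function.update t p v r
      = (∑ r ∈ s, h r * t r) + h p * (v - t p) := by
  have e : (fun r => h r * Function.update t p v r)
      = Function.update (fun r => h r * t r) p (h p * v) := by
    funext r
    by_cases hr : r = p
    · subst hr; simp
    · simp [Function.update_of_ne hr]
  calc ∑ r ∈ s, h r * Function.update t p v r
      = ∑ r ∈ s, Function.update (fun r => h r * t r) p (h p * v) r := by rw [e]
    _ = (∑ r ∈ s, h r * t r) + h p * (v - t p) := by
        rw [Finset.sum_update_of_mem hp, Finset.sum_sdiff_eq_sub (by simpa using hp)]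
        simp
        ring

lemma floor_toNat_cast (n : ℕ) : ⌊((n : ℝ))⌋.toNat = n := by simp

lemma ceil_toNat_cast (n : ℕ) : ⌈((n : ℝ))⌉.toNat = n := by simp

lemma floor_toNat_add_frac (n : ℕ) {d : ℝ} (h0 : 0 ≤ d) (h1 : d < 1) :
    ⌊(n : ℝ) + d⌋.toNat = n := by
  have : ⌊(n : ℝ) + d⌋ = (n : ℤ) := Int.floor_eq_iff.2 ⟨by push_cast; linarith, by push_cast; linarith⟩
  rw [this]; simp

lemma ceil_toNat_add_frac (n : ℕ) {d : ℝ} (h0 : 0 < d) (h1 : d ≤ 1) :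
    ⌈(n : ℝ) + d⌉.toNat = n + 1 := by
  have : ⌈(n : ℝ) + d⌉ = (n : ℤ) + 1 := by
    rw [Int.ceil_eq_iff]
    constructor
    · push_cast; linarith
    · push_cast; linarith
  rw [this]; omega

def GoodState (M : ℕ) (h : ℕ → ℝ) (E : ℕ → ℕ → ℝ) (tavg : ℝ) (st : (ℕ → ℝ) × ℝ) : Prop :=
  0 ≤ st.2 ∧ (∀ r, 0 ≤ st.1 r) ∧
  (∑ r ∈ Finset.range (M + 1), h r * st.1 r) + st.2 = tavg ∧
  (0 < st.2 → ∀ r, ∃ n : ℕ, st.1 r = (n : ℝ)) ∧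
  (∃ r0, ∀ r, r ≠ r0 → ∃ n : ℕ, st.1 r = (n : ℝ)) ∧
  (∀ r ∈ Finset.range (M + 1), ∀ r' ∈ Finset.range (M + 1), 0 < st.1 r →
      E r' (⌊st.1 r'⌋.toNat + 1) - E r' ⌊st.1 r'⌋.toNat
        ≤ E r ⌈st.1 r⌉.toNat - E r (⌈st.1 r⌉.toNat - 1))

lemma good_step (M : ℕ) (h : ℕ → ℝ) (hh0 : ∀ r ∈ Finset.range (M + 1), 0 < h r)
    (E : ℕ → ℕ → ℝ) (hconc : ∀ r t, E r (t + 2) - E r (t + 1) ≤ E r (t + 1) - E r t)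
    (tavg : ℝ) (t : ℕ → ℝ) (u : ℝ) (hg : GoodState M h E tavg (t, u)) :
    GoodState M h E tavg (greedyStep M h E (t, u)) ∧
    (0 < u → ((greedyStep M h E (t, u)).2 = 0 ∨
      (greedyStep M h E (t, u)).2 ≤ u - (Finset.range (M + 1)).inf' ⟨0, by simp⟩ h)) := by
  obtain ⟨hu, hpos, hsum, hnat, hone, hJ⟩ := hg
  simp only at hu hpos hsum hnat hone hJ
  by_cases hu0 : u ≤ 0
  · rw [greedyStep_nonpos M h E (t, u) hu0]
    exact ⟨⟨hu, hpos, hsum, hnat, hone, hJ⟩, fun hc => absurd hc (not_lt.2 hu0)⟩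
  push_neg at hu0
  obtain ⟨hpmem, hpmax⟩ := pick_spec M E t
  have hallnat := hnat hu0
  by_cases hful : h (pick M E t) * (1 - (t (pick M E t) - (⌊t (pick M E t)⌋ : ℝ))) ≤ u
  · -- full step
    rw [greedyStep_full M h E t u hu0 hful]
    revert hpmem hpmax hful
    generalize pick M E t = p
    intro hpmem hpmax hful
    have hppos : 0 < h p := hh0 p hpmem
    obtain ⟨np, hnp⟩ := hallnat p
    have hfl_p : (⌊t p⌋ : ℝ) = (np : ℝ) := by rw [hnp]; simp
    have hfrac : t p - (⌊t p⌋ : ℝ) = 0 := by rw [hfl_p, hnp]; ring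
    have hnsp : E p (⌊t p⌋.toNat + 1) - E p ⌊t p⌋.toNat = E p (np + 1) - E p np := by
      rw [hnp, floor_toNat_cast]
    have hhu : h p ≤ u := by rw [hfrac] at hful; linarith
    have hval : (⌊t p⌋ : ℝ) + 1 = ((np + 1 : ℕ) : ℝ) := by rw [hfl_p]; push_cast; ring
    have hu2 : u - h p * (1 - (t p - (⌊t p⌋ : ℝ))) = u - h p := by rw [hfrac]; ring
    rw [hval, hu2]
    have hupd : ∀ r, r ≠ p → Function.update t p ((np + 1 : ℕ) : ℝ) r = t r :=
      fun r hr => Function.update_of_ne hr _ _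
    have hupdp : Function.update t p ((np + 1 : ℕ) : ℝ) p = ((np + 1 : ℕ) : ℝ) :=
      Function.update_self _ _ _
    refine ⟨⟨by simp only; linarith, ?_, ?_, ?_, ?_, ?_⟩, ?_⟩
    · intro r
      dsimp only
      by_cases hr : r = p
      · rw [hr, hupdp]; positivity
      · rw [hupd r hr]; exact hpos r
    · dsimp only
      rw [sum_update_mul h t _ hpmem, hnp]
      push_cast
      linarith [hsum]
    · intro _ r
      dsimp only
      by_cases hr : r = p
      · exact ⟨np + 1, by rw [hr, hupdp]⟩
      · rw [hupd r hr]; exact hallnat r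
    · refine ⟨0, fun r _ => ?_⟩
      dsimp only
      by_cases hr : r = p
      · exact ⟨np + 1, by rw [hr, hupdp]⟩
      · rw [hupd r hr]; exact hallnat r
    · intro r hr r' hr' hrpos
      dsimp only at hrpos ⊢
      by_cases hrp : r = p
      · rw [hrp] at hrpos ⊢
        rw [hupdp, ceil_toNat_cast]
        have hRHS : E p (np + 1 - 1) = E p np := by norm_num
        rw [hRHS]
        by_cases hr'p : r' = p
        · rw [hr'p, hupdp, floor_toNat_cast]
          have := hconc p np
          have e2 : np + 1 + 1 = np + 2 := rfl
          rw [e2]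
          linarith
        · rw [hupd r' hr'p]
          have := hpmax r' hr'
          rw [hnsp] at this
          exact this
      · rw [hupd r hrp] at hrpos ⊢
        have hold := hJ r hr
        by_cases hr'p : r' = p
        · rw [hr'p, hupdp, floor_toNat_cast]
          have h1 : E p (np + 1 + 1) - E p (np + 1) ≤ E p (np + 1) - E p np := hconc p np
          have h2 := hold p hpmem hrpos
          rw [hnsp] at h2
          linarith
        · rw [hupd r' hr'p]
          exact hold r' hr' hrpos
    · intro _
      right
      dsimp only
      exact sub_le_sub_left (Finset.inf'_le h hpmem) u
  · -- partial step
    rw [greedyStep_part M h E t u hu0 hful]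
    revert hpmem hpmax hful
    generalize pick M E t = p
    intro hpmem hpmax hful
    have hppos : 0 < h p := hh0 p hpmem
    obtain ⟨np, hnp⟩ := hallnat p
    have hfl_p : (⌊t p⌋ : ℝ) = (np : ℝ) := by rw [hnp]; simp
    have hfrac : t p - (⌊t p⌋ : ℝ) = 0 := by rw [hfl_p, hnp]; ring
    have hnsp : E p (⌊t p⌋.toNat + 1) - E p ⌊t p⌋.toNat = E p (np + 1) - E p np := by
      rw [hnp, floor_toNat_cast]
    push_neg at hful
    rw [hfrac] at hful
    have hd0 : 0 < u / h p := div_pos hu0 hppos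
    have hd1 : u / h p < 1 := (div_lt_one hppos).2 (by linarith)
    have hvp : t p + u / h p = (np : ℝ) + u / h p := by rw [hnp]
    have hflv : ⌊t p + u / h p⌋.toNat = np := by
      rw [hvp]; exact floor_toNat_add_frac np hd0.le hd1
    have hclv : ⌈t p + u / h p⌉.toNat = np + 1 := by
      rw [hvp]; exact ceil_toNat_add_frac np hd0 hd1.le
    have hupd : ∀ r, r ≠ p → Function.update t p (t p + u / h p) r = t r :=
      fun r hr => Function.update_of_ne hr _ _
    have hupdp : Function.update t p (t p + u / h p) p = t p + u / h p :=
      Function.update_self _ _ _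
    refine ⟨⟨le_refl 0, ?_, ?_, ?_, ?_, ?_⟩, ?_⟩
    · intro r
      dsimp only
      by_cases hr : r = p
      · rw [hr, hupdp]; have := hpos p; positivity
      · rw [hupd r hr]; exact hpos r
    · dsimp only
      rw [sum_update_mul h t _ hpmem]
      have hmul : h p * (t p + u / h p - t p) = u := by
        field_simp
        ring
      rw [hmul]
      linarith [hsum]
    · intro hcon
      dsimp only at hcon
      exact absurd hcon (by norm_num)
    · exact ⟨p, fun r hr => by dsimp only; rw [hupd r hr]; exact hallnat r⟩
    · intro r hr r' hr' hrpos
      dsimp only at hrpos ⊢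
      by_cases hrp : r = p
      · rw [hrp] at hrpos ⊢
        rw [hupdp, hclv]
        have hRHS : E p (np + 1 - 1) = E p np := by norm_num
        rw [hRHS]
        by_cases hr'p : r' = p
        · rw [hr'p, hupdp, hflv]
        · rw [hupd r' hr'p]
          have := hpmax r' hr'
          rw [hnsp] at this
          exact this
      · rw [hupd r hrp] at hrpos ⊢
        have hold := hJ r hr
        by_cases hr'p : r' = p
        · rw [hr'p, hupdp, hflv]
          have h2 := hold p hpmem hrpos
          rw [hnsp] at h2
          exact h2
        · rw [hupd r' hr'p]
          exact hold r' hr' hrpos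
    · intro _
      left
      rfl

/-- Greedy correctness: starting from `t_r = 0` and budget `t_avg`,
the water-filling greedy terminates (the budget reaches `0` after finitely many steps)
with a feasible solution that is optimal for `max Σ_r h_r E_r(t_r)` subject to
`Σ_r h_r t_r = t_avg`, `t_r ≥ 0`, and that has at most one non-integer coordinate. -/
theorem greedy_correct
    (M : ℕ) (h : ℕ → ℝ) (hh0 : ∀ r ∈ Finset.range (M + 1), 0 < h r)
    (hh1 : ∑ r ∈ Finset.range (M + 1), h r = 1)
    (E : ℕ → ℕ → ℝ)
    (hconc : ∀ r t, E r (t + 2) - E r (t + 1) ≤ E r (t + 1) - E r t)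
    (hmono : ∀ r t, E r t ≤ E r (t + 1))
    (hzero : ∀ r, E r 0 = 0)
    (tavg : ℝ) (htavg : 0 ≤ tavg) :
    ∃ N : ℕ,
      ((greedyStep M h E)^[N] (fun _ => 0, tavg)).2 = 0
      ∧ (∀ r, 0 ≤ ((greedyStep M h E)^[N] (fun _ => 0, tavg)).1 r)
      ∧ (∑ r ∈ Finset.range (M + 1),
            h r * ((greedyStep M h E)^[N] (fun _ => 0, tavg)).1 r) = tavg
      ∧ (∀ s : ℕ → ℝ, (∀ r, 0 ≤ s r) →
          (∑ r ∈ Finset.range (M + 1), h r * s r) = tavg →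
          ∑ r ∈ Finset.range (M + 1), h r * interp (E r) (s r)
            ≤ ∑ r ∈ Finset.range (M + 1),
                h r * interp (E r) (((greedyStep M h E)^[N] (fun _ => 0, tavg)).1 r))
      ∧ (∃ r0 : ℕ, ∀ r ∈ Finset.range (M + 1), r ≠ r0 →
          ∃ n : ℕ, ((greedyStep M h E)^[N] (fun _ => 0, tavg)).1 r = (n : ℝ)) := by
  classical
  set F := greedyStep M h E with hF
  set s0 : (ℕ → ℝ) × ℝ := (fun _ => 0, tavg) with hs0
  have hg0 : GoodState M h E tavg s0 := by
    refine ⟨htavg, fun r => le_refl 0, by simp [hs0], fun _ r => ⟨0, by simp [hs0]⟩,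
      ⟨0, fun r _ => ⟨0, by simp [hs0]⟩⟩, ?_⟩
    intro r _ r' _ hrpos
    simp only [hs0] at hrpos
    exact absurd hrpos (by norm_num)
  have hgood : ∀ k, GoodState M h E tavg (F^[k] s0) := by
    intro k
    induction k with
    | zero => simpa using hg0
    | succ k ih =>
      rw [Function.iterate_succ_apply']
      have h1 := good_step M h hh0 E hconc tavg (F^[k] s0).1 (F^[k] s0).2 (by
        rw [Prod.mk.eta]; exact ih)
      rw [Prod.mk.eta] at h1
      exact h1.1
  set c := (Finset.range (M + 1)).inf' ⟨0, by simp⟩ h with hcdef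
  have hc : 0 < c := by
    rw [hcdef]
    exact (Finset.lt_inf'_iff _).2 hh0
  have hdec : ∀ k, (F^[k] s0).2 = 0 ∨ (F^[k] s0).2 ≤ tavg - k * c := by
    intro k
    induction k with
    | zero => right; simp [hs0]
    | succ k ih =>
      rcases ih with ih0 | ihle
      · left
        rw [Function.iterate_succ_apply', hF, greedyStep_nonpos M h E _ (le_of_eq ih0)]
        exact ih0
      · by_cases hz : (F^[k] s0).2 ≤ 0
        · left
          have hz0 : (F^[k] s0).2 = 0 := le_antisymm hz (hgood k).1
          rw [Function.iterate_succ_apply', hF, greedyStep_nonpos M h E _ hz]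
          exact hz0
        · push_neg at hz
          have h1 := (good_step M h hh0 E hconc tavg (F^[k] s0).1 (F^[k] s0).2 (by
            rw [Prod.mk.eta]; exact hgood k)).2
          rw [Prod.mk.eta] at h1
          rcases h1 hz with h2 | h2
          · left
            rw [Function.iterate_succ_apply', hF]
            exact h2
          · right
            rw [Function.iterate_succ_apply', hF]
            rw [← hcdef] at h2
            push_cast
            linarith
  obtain ⟨N, hN⟩ := exists_nat_gt (tavg / c)
  have hNc : tavg < N * c := by
    rw [div_lt_iff₀ hc] at hN
    linarith
  have hN0 : (F^[N] s0).2 = 0 := by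
    rcases hdec N with h1 | h1
    · exact h1
    · have := (hgood N).1
      linarith
  obtain ⟨hu, hpos, hsum, hnat, hone, hJ⟩ := hgood N
  have hTsum : (∑ r ∈ Finset.range (M + 1), h r * (F^[N] s0).1 r) = tavg := by
    rw [hN0] at hsum
    linarith
  refine ⟨N, hN0, hpos, hTsum, ?_, ?_⟩
  · intro s hs hsum_s
    obtain ⟨q, hqmem, hqmax⟩ := Finset.exists_max_image (Finset.range (M + 1))
      (fun r => E r (⌊(F^[N] s0).1 r⌋.toNat + 1) - E r ⌊(F^[N] s0).1 r⌋.toNat) ⟨0, by simp⟩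
    set lam := E q (⌊(F^[N] s0).1 q⌋.toNat + 1) - E q ⌊(F^[N] s0).1 q⌋.toNat with hlam
    have key : ∀ r ∈ Finset.range (M + 1),
        interp (E r) (s r) - interp (E r) ((F^[N] s0).1 r) ≤ lam * (s r - (F^[N] s0).1 r) := by
      intro r hr
      exact interp_grad (E r) (hconc r) (hs r) (hpos r) (hqmax r hr)
        (fun hp' => hJ r hr q hqmem hp')
    have key2 : ∀ r ∈ Finset.range (M + 1),
        h r * interp (E r) (s r) ≤
          h r * interp (E r) ((F^[N] s0).1 r)
            + (lam * (h r * s r) - lam * (h r * (F^[N] s0).1 r)) := by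
      intro r hr
      have hhr := (hh0 r hr).le
      have h2 := mul_le_mul_of_nonneg_left (key r hr) hhr
      have h3 : h r * (lam * (s r - (F^[N] s0).1 r))
          = lam * (h r * s r) - lam * (h r * (F^[N] s0).1 r) := by ring
      linarith [h2, h3]
    have hle := Finset.sum_le_sum key2
    rw [Finset.sum_add_distrib, Finset.sum_sub_distrib, ← Finset.mul_sum, ← Finset.mul_sum,
      hsum_s, hTsum] at hle
    linarith
  · obtain ⟨r0, h1⟩ := hone
    exact ⟨r0, fun r _ hr => h1 r hr⟩
end
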